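/- arXiv:1412.0681 — 7 statements merged into one kernel-verified Lean document; each statement's English description precedes it below -/
import Mathlib

section
/- Let f : [0,1] → [0,1] satisfy f(x) ≤ 2x for all x in [0,1]. Then for all x, y, z in [0,1]: 2·(x(1 - yz) + (1-y)(1 - f(x)·z) + (1-z)(1 - f(x)·y)) ≥ (y(1-z) + z(1-y) + (1-f(x))(1-z) + (1-f(x))(1-y)). -/
theorem stmt_1 (f : ℝ → ℝ) (hf : ∀ x ∈ Set.Icc (0:ℝ) 1, f x ∈ Set.Icc (0:ℝ) 1)
    (hf2 : ∀ x ∈ Set.Icc (0:ℝ) 1, f x ≤ 2*x)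
    (x y z : ℝ) (hx : x ∈ Set.Icc (0:ℝ) 1) (hy : y ∈ Set.Icc (0:ℝ) 1)
    (hz : z ∈ Set.Icc (0:ℝ) 1) :
    2*(x*(1 - y*z) + (1-y)*(1 - f x * z) + (1-z)*(1 - f x * y))
      ≥ y*(1-z) + z*(1-y) + (1 - f x)*(1-z) + (1 - f x)*(1-y) := by
  obtain ⟨hw0, hw1⟩ := hf x hx
  have hw2 := hf2 x hx
  obtain ⟨hx0, hx1⟩ := hx
  obtain ⟨hy0, hy1⟩ := hy
  obtain ⟨hz0, hz1⟩ := hz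
  nlinarith [mul_nonneg hy0 hz0, mul_nonneg (sub_nonneg.2 hy1) (sub_nonneg.2 hz1),
    mul_nonneg hw0 (mul_nonneg hy0 hz0), mul_nonneg (sub_nonneg.2 hw1) (mul_nonneg hy0 hz0),
    mul_nonneg hw0 (mul_nonneg (sub_nonneg.2 hy1) (sub_nonneg.2 hz1)),
    mul_nonneg (sub_nonneg.2 hw2) (mul_nonneg hy0 hz0)]
end

section
/- With f⁻(x) = sqrt(1 - α(1-2x)) type bounds: for α = 2.025 and x = 0.48, the quadratic inequality (1 + α - 2αx)·t² - 2(2 - αx)·sqrt(1 - α(1-2x))·t + 2·sqrt(1 - α(1-2x)) - α + 1 ≤ 0 in t has both roots greater than 1 - sqrt(1 - αx). Consequently there is no value t = f⁺(x) ≤ 1 - sqrt(1-αx) satisfying the inequality. -/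
theorem stmt_6 :
    ∀ t : ℝ, t ≤ 1 - Real.sqrt (1 - 2.025*0.48) →
      ¬ ((1 + 2.025 - 2*2.025*0.48)*t^2
          - 2*(2 - 2.025*0.48)*Real.sqrt (1 - 2.025*(1 - 2*0.48))*t
          + 2*Real.sqrt (1 - 2.025*(1 - 2*0.48)) - 2.025 + 1 ≤ 0) := by
  intro t ht h
  have e1 : (1 - 2.025*0.48 : ℝ) = 0.028 := by norm_num
  have e2 : (1 - 2.025*(1 - 2*0.48) : ℝ) = 0.919 := by norm_num
  rw [e1] at ht
  rw [e2] at h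
  set s1 := Real.sqrt 0.028 with hs1def
  set s2 := Real.sqrt 0.919 with hs2def
  have hs1sq : s1^2 = 0.028 := Real.sq_sqrt (by norm_num)
  have hs2sq : s2^2 = 0.919 := Real.sq_sqrt (by norm_num)
  have hs1nn : 0 ≤ s1 := Real.sqrt_nonneg _
  have hs2nn : 0 ≤ s2 := Real.sqrt_nonneg _
  have hs1lb : 0.167332 ≤ s1 := by nlinarith
  have hs1ub : s1 ≤ 0.1673321 := by nlinarith
  have hs2lb : 0.9586448 ≤ s2 := by nlinarith
  have hs2ub : s2 ≤ 0.9586449 := by nlinarith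
  nlinarith [mul_nonneg (sub_nonneg.2 ht) (by nlinarith : (0:ℝ) ≤ 2.056*s2 - 1.081*(t + 1 - s1)),
    mul_le_mul hs1ub hs2ub hs2nn (by norm_num),
    mul_le_mul hs1lb hs2lb (by norm_num) hs1nn]
end

section
/- For all a, b, c in [0,1] with b ≤ a + c, a < 1/3, and c < 2/3: 3·(1 - b + a - (3/2)abc) - (1 + b - 3bc) ≥ 0. -/
theorem stmt_7 (a b c : ℝ) (ha : a ∈ Set.Icc (0:ℝ) 1) (hb : b ∈ Set.Icc (0:ℝ) 1)
    (hc : c ∈ Set.Icc (0:ℝ) 1) (htri : b ≤ a + c) (ha3 : a < 1/3) (hc3 : c < 2/3) :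
    3*(1 - b + a - (3/2)*a*b*c) - (1 + b - 3*b*c) ≥ 0 := by
  obtain ⟨ha0, ha1⟩ := ha
  obtain ⟨hb0, hb1⟩ := hb
  obtain ⟨hc0, hc1⟩ := hc
  nlinarith [mul_nonneg hb0 hc0, mul_nonneg (mul_nonneg hb0 hc0) (by linarith : (1:ℝ) - (3/2)*a ≥ 0), mul_nonneg ha0 hc0, sq_nonneg (b - c)]
end

section
/- For all a, b, c in [0,1]: 3·(3 - a - b - c - ab - ac - bc + 3abc) - (3 - 2a - 2b - 2c + ab + bc + ac) ≥ 0; in fact the difference is at least 5(1-a)(1-b) when c ≤ 1. -/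
theorem stmt_9 (a b c : ℝ) (ha : a ∈ Set.Icc (0:ℝ) 1) (hb : b ∈ Set.Icc (0:ℝ) 1)
    (hc : c ∈ Set.Icc (0:ℝ) 1) :
    3*(3 - a - b - c - a*b - a*c - b*c + 3*a*b*c) - (3 - 2*a - 2*b - 2*c + a*b + b*c + a*c)
      ≥ 5*(1-a)*(1-b) ∧
    3*(3 - a - b - c - a*b - a*c - b*c + 3*a*b*c) - (3 - 2*a - 2*b - 2*c + a*b + b*c + a*c)
      ≥ 0 := by
  obtain ⟨ha0, ha1⟩ := ha
  obtain ⟨hb0, hb1⟩ := hb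
  obtain ⟨hc0, hc1⟩ := hc
  have h1 : (0:ℝ) ≤ (1-c)*(1-b) := mul_nonneg (by linarith) (by linarith)
  have h2 : (0:ℝ) ≤ (1-c)*(a*(1-b)) := mul_nonneg (by linarith) (mul_nonneg ha0 (by linarith))
  have h3 : (0:ℝ) ≤ (1-c)*(b*(1-a)) := mul_nonneg (by linarith) (mul_nonneg hb0 (by linarith))
  have h4 : (0:ℝ) ≤ (1-a)*(1-b) := mul_nonneg (by linarith) (by linarith)
  constructor <;> nlinarith [h1, h2, h3, h4]
end

section
/- For all a, b, c in [0,1] with a ≥ 1/3: 3·(2 - 2b - 2c + 2bc + a(1 - bc)) - (c + b - 2bc) ≥ 7(1-b)(1-c) ≥ 0. -/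
theorem stmt_11 (a b c : ℝ) (ha : a ∈ Set.Icc (0:ℝ) 1) (hb : b ∈ Set.Icc (0:ℝ) 1)
    (hc : c ∈ Set.Icc (0:ℝ) 1) (ha3 : a ≥ 1/3) :
    3*(2 - 2*b - 2*c + 2*b*c + a*(1 - b*c)) - (c + b - 2*b*c) ≥ 7*(1-b)*(1-c) ∧
    7*(1-b)*(1-c) ≥ 0 := by
  obtain ⟨hb0, hb1⟩ := hb
  obtain ⟨hc0, hc1⟩ := hc
  constructor
  · nlinarith [mul_nonneg hb0 hc0, mul_nonneg (sub_nonneg.2 hb1) (sub_nonneg.2 hc1),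
      mul_nonneg hb0 (sub_nonneg.2 hc1), mul_nonneg hc0 (sub_nonneg.2 hb1)]
  · nlinarith [mul_nonneg (sub_nonneg.2 hb1) (sub_nonneg.2 hc1)]
end

section
/- For every x in [0,1], the function f(x) defined as 0 for x < 0.19, ((x-0.19)/0.3195)² for 0.19 ≤ x ≤ 0.5095, and 1 for x > 0.5095, satisfies f(x) ≤ 1 - sqrt(1 - 2.06·x) whenever x ≤ 1/2.06. -/
noncomputable def fplus (x : ℝ) : ℝ :=
  if x < 0.19 then 0 else if x ≤ 0.5095 then ((x - 0.19)/0.3195)^2 else 1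

theorem stmt_13 : ∀ x ∈ Set.Icc (0:ℝ) 1, x ≤ 1/2.06 →
    fplus x ≤ 1 - Real.sqrt (1 - 2.06*x) := by
  rintro x ⟨hx0, hx1⟩ hx
  unfold fplus
  split_ifs with h1 h2
  · have h : Real.sqrt (1 - 2.06*x) ≤ 1 := Real.sqrt_le_one.mpr (by linarith)
    linarith
  · push_neg at h1
    set q := ((x - 0.19)/0.3195)^2 with hq
    have hq' : q = (x - 0.19)^2 / 0.3195^2 := by rw [hq, div_pow]
    have hq0 : 0 ≤ q := sq_nonneg _
    have hq1 : q ≤ 1 := by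
      rw [hq', div_le_one (by norm_num)]
      nlinarith
    have hpoly : (0.3195:ℝ)^4 * (1 - 2.06*x) ≤ ((0.3195:ℝ)^2 - (x - 0.19)^2)^2 := by
      nlinarith [sq_nonneg (x - 0.479), sq_nonneg ((x - 0.19)^2 - 0.289^2), sq_nonneg (x - 0.19), mul_nonneg (sq_nonneg (x - 0.479)) (sub_nonneg.2 h1)]
    have key : 1 - 2.06*x ≤ (1 - q)^2 := by
      rw [hq', show (1 - (x - 0.19)^2/(0.3195:ℝ)^2) = ((0.3195:ℝ)^2 - (x - 0.19)^2)/(0.3195:ℝ)^2 by ring, div_pow, le_div_iff₀ (by norm_num)]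
      nlinarith [hpoly]
    have h : Real.sqrt (1 - 2.06*x) ≤ 1 - q :=
      calc Real.sqrt (1 - 2.06*x) ≤ Real.sqrt ((1-q)^2) := Real.sqrt_le_sqrt key
        _ = 1 - q := Real.sqrt_sq (by linarith)
    linarith
  · exfalso
    have : (1:ℝ)/2.06 ≤ 0.5095 := by norm_num
    linarith
end

section
/- Let f(y) = ((y - 0.19)/0.3195)² for y in [0.19, 0.5095]. Then 2·(2.06·y - 2f(y) + f(y)²) ≥ 0 for all y in [0.19, 0.5095]. -/
theorem stmt_18 : ∀ y ∈ Set.Icc (0.19:ℝ) 0.5095,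
    2*(2.06*y - 2*((y - 0.19)/0.3195)^2 + (((y - 0.19)/0.3195)^2)^2) ≥ 0 := by
  rintro y ⟨h1, h2⟩
  set t : ℝ := (y - 0.19)/0.3195 with ht
  have hy : y = 0.19 + 0.3195 * t := by rw [ht]; field_simp; ring
  have ht0 : 0 ≤ t := by rw [ht]; exact div_nonneg (by linarith) (by norm_num)
  have ht1 : t ≤ 1 := by rw [ht]; rw [div_le_one (by norm_num)]; linarith
  rw [hy]
  nlinarith [sq_nonneg (t^2 - 0.82), mul_nonneg ht0 (sub_nonneg.2 ht1), sq_nonneg (t - 0.905), mul_nonneg (mul_nonneg ht0 ht0) (sub_nonneg.2 ht1), sq_nonneg t]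
end
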